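/- Let f : {0,1}^n → {0,1} be any symmetric Boolean function (i.e., f(x) depends only on the number of 1s in x). Then for a, b, m with a + m + b = w as given by a width-w commutative OBDD of f, f is described by a commutative STS with at most (a+m)·(b+1) ≤ (w+1)²/4 states, with state set [0,b] × [0,a+m-1], transition functions f0(i,j) = (min(i+1,b), j), f1(i,j) = (i, j+1) if j < a+m-1 and (i, a) if j = a+m-1. -/
import Mathlib


/-- The extended transition function of a state transition system. -/
def delta {S : Type*} (f0 f1 : S → S) (s0 : S) (l : List Bool) : S :=
  l.foldl (fun s b => if b then f1 s else f0 s) s0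

namespace Stmt8Aux

theorem delta_eq (a m b : ℕ) :
    ∀ (l : List Bool) (s : ℕ × ℕ),
      delta (fun p : ℕ × ℕ => (min (p.1 + 1) b, p.2))
            (fun p : ℕ × ℕ => (p.1, if p.2 + 1 < a + m then p.2 + 1 else a)) s l
      = ((fun i => min (i + 1) b)^[l.count false] s.1,
         (fun j => if j + 1 < a + m then j + 1 else a)^[l.count true] s.2) := by
  intro l
  induction l with
  | nil => intro s; simp [delta]
  | cons c l ih =>
    intro s
    cases c with
    | false =>
      have h : delta (fun p : ℕ × ℕ => (min (p.1 + 1) b, p.2))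
            (fun p : ℕ × ℕ => (p.1, if p.2 + 1 < a + m then p.2 + 1 else a)) s (false :: l)
          = delta (fun p : ℕ × ℕ => (min (p.1 + 1) b, p.2))
            (fun p : ℕ × ℕ => (p.1, if p.2 + 1 < a + m then p.2 + 1 else a))
            (min (s.1 + 1) b, s.2) l := by
        simp [delta]
      rw [h, ih]
      simp [Function.iterate_succ_apply]
    | true =>
      have h : delta (fun p : ℕ × ℕ => (min (p.1 + 1) b, p.2))
            (fun p : ℕ × ℕ => (p.1, if p.2 + 1 < a + m then p.2 + 1 else a)) s (true :: l)
          = delta (fun p : ℕ × ℕ => (min (p.1 + 1) b, p.2))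
            (fun p : ℕ × ℕ => (p.1, if p.2 + 1 < a + m then p.2 + 1 else a))
            (s.1, if s.2 + 1 < a + m then s.2 + 1 else a) l := by
        simp [delta]
      rw [h, ih]
      simp [Function.iterate_succ_apply]

theorem iter0 (b : ℕ) : ∀ y, (fun i => min (i + 1) b)^[y] 0 = min y b := by
  intro y
  induction y with
  | zero => simp
  | succ y ih =>
    rw [Function.iterate_succ_apply', ih]
    omega

/-- properties of g = F1^[x] 0 -/
theorem iter1 (a m : ℕ) (hm : 1 ≤ m) : ∀ x,
    (x < a + m → (fun j => if j + 1 < a + m then j + 1 else a)^[x] 0 = x) ∧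
    (a ≤ x → a ≤ (fun j => if j + 1 < a + m then j + 1 else a)^[x] 0 ∧
      (fun j => if j + 1 < a + m then j + 1 else a)^[x] 0 < a + m ∧
      (fun j => if j + 1 < a + m then j + 1 else a)^[x] 0 % m = x % m) := by
  intro x
  induction x with
  | zero =>
    refine ⟨fun _ => by simp, fun ha => ?_⟩
    have ha0 : a = 0 := by omega
    simp [ha0]
    omega
  | succ x ih =>
    rw [Function.iterate_succ_apply']
    by_cases h : x + 1 < a + m
    · have hx : x < a + m := by omega
      rw [ih.1 hx]
      exact ⟨fun _ => by simp [h], fun _ => by simp [h]; omega⟩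
    · have hax : a ≤ x := by omega
      obtain ⟨h1, h2, h3⟩ := ih.2 hax
      refine ⟨fun hc => absurd hc h, fun _ => ?_⟩
      have hstep : ((fun j => if j + 1 < a + m then j + 1 else a)^[x] 0 + 1) % m
          = (x + 1) % m := Nat.ModEq.add_right 1 h3
      by_cases hgs : (fun j => if j + 1 < a + m then j + 1 else a)^[x] 0 + 1 < a + m
      · simp only [if_pos hgs]
        exact ⟨by omega, by omega, hstep⟩
      · simp only [if_neg hgs]
        have hg1 : (fun j => if j + 1 < a + m then j + 1 else a)^[x] 0 + 1 = a + m := by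
          omega
        refine ⟨le_refl a, by omega, ?_⟩
        calc a % m = (a + m) % m := by simp [Nat.add_mod_right]
          _ = (x + 1) % m := by rw [← hg1]; exact hstep

end Stmt8Aux

/-- A symmetric Boolean function on `n` inputs with a width-`w` commutative OBDD,
with parameters `a`, `m`, `b` (with `a + m + b = w`) given by the modulo-pattern
lemma, is described by a commutative STS with state set `[0,b] × [0,a+m-1]`
(hence at most `(a+m)·(b+1) ≤ (w+1)²/4` states), transition functions
`f0(i,j) = (min(i+1,b), j)` and `f1(i,j) = (i, j+1)` if `j < a+m-1`,
`f1(i,j) = (i, a)` if `j = a+m-1`. -/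
theorem stmt_8 (n w a m b : ℕ) (habm : a + m + b = w) (hm : 1 ≤ m)
    (f : List Bool → Bool)
    (hsym : ∀ l l' : List Bool, l.length = n → l'.length = n →
      l.count true = l'.count true → f l = f l')
    (hpattern : ∀ x x' y y' : ℕ, x + y = n → x' + y' = n →
      a ≤ x → a ≤ x' → b ≤ y → b ≤ y' → x % m = x' % m →
      f (List.replicate x true ++ List.replicate y false) =
        f (List.replicate x' true ++ List.replicate y' false)) :
    ∃ T : Set (ℕ × ℕ),
      (∀ p : ℕ × ℕ,
        (fun p : ℕ × ℕ => (min (p.1 + 1) b, p.2))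
          ((fun p : ℕ × ℕ => (p.1, if p.2 + 1 < a + m then p.2 + 1 else a)) p) =
        (fun p : ℕ × ℕ => (p.1, if p.2 + 1 < a + m then p.2 + 1 else a))
          ((fun p : ℕ × ℕ => (min (p.1 + 1) b, p.2)) p)) ∧
      (∀ l : List Bool, l.length = n →
        (delta (fun p : ℕ × ℕ => (min (p.1 + 1) b, p.2))
               (fun p : ℕ × ℕ => (p.1, if p.2 + 1 < a + m then p.2 + 1 else a))
               (0, 0) l ∈ T ↔ f l = true)) ∧
      4 * ((a + m) * (b + 1)) ≤ (w + 1) ^ 2 := by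
  classical
  have hdelta : ∀ l : List Bool,
      delta (fun p : ℕ × ℕ => (min (p.1 + 1) b, p.2))
            (fun p : ℕ × ℕ => (p.1, if p.2 + 1 < a + m then p.2 + 1 else a)) (0,0) l
      = (min (l.count false) b,
         (fun j => if j + 1 < a + m then j + 1 else a)^[l.count true] 0) := by
    intro l
    rw [Stmt8Aux.delta_eq a m b l (0,0)]
    simp [Stmt8Aux.iter0]
  have hkey : ∀ l l' : List Bool, l.length = n → l'.length = n →
      delta (fun p : ℕ × ℕ => (min (p.1 + 1) b, p.2))
            (fun p : ℕ × ℕ => (p.1, if p.2 + 1 < a + m then p.2 + 1 else a)) (0,0) l =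
      delta (fun p : ℕ × ℕ => (min (p.1 + 1) b, p.2))
            (fun p : ℕ × ℕ => (p.1, if p.2 + 1 < a + m then p.2 + 1 else a)) (0,0) l' →
      f l = f l' := by
    intro l l' hl hl' heq
    rw [hdelta, hdelta, Prod.mk.injEq] at heq
    obtain ⟨hmin, hgeq⟩ := heq
    obtain ⟨x, y, hx, hy⟩ : ∃ x y, l.count true = x ∧ l.count false = y := ⟨_, _, rfl, rfl⟩
    obtain ⟨x', y', hx', hy'⟩ : ∃ x y, l'.count true = x ∧ l'.count false = y :=
      ⟨_, _, rfl, rfl⟩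
    have hcl : x + y = n := by
      have := l.count_true_add_count_false; omega
    have hcl' : x' + y' = n := by
      have := l'.count_true_add_count_false; omega
    rw [hy, hy'] at hmin
    rw [hx, hx'] at hgeq
    have hcan : f l = f (List.replicate x true ++ List.replicate y false) := by
      apply hsym _ _ hl
      · simp [List.length_append]; omega
      · simp [List.count_append, List.count_replicate, hx]
    have hcan' : f l' = f (List.replicate x' true ++ List.replicate y' false) := by
      apply hsym _ _ hl'
      · simp [List.length_append]; omega
      · simp [List.count_append, List.count_replicate, hx']
    rw [hcan, hcan']
    by_cases hxx : x = x'
    · have hyy : y = y' := by omega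
      rw [hxx, hyy]
    · have H := Stmt8Aux.iter1 a m hm
      have hmod : a ≤ x ∧ a ≤ x' ∧ x % m = x' % m := by
        by_cases hax : a ≤ x
        · by_cases hax' : a ≤ x'
          · obtain ⟨_, _, h3⟩ := (H x).2 hax
            obtain ⟨_, _, h3'⟩ := (H x').2 hax'
            exact ⟨hax, hax', by rw [← h3, ← h3', hgeq]⟩
          · exfalso
            have hgx' := (H x').1 (by omega)
            obtain ⟨h1, _, _⟩ := (H x).2 hax
            omega
        · have hgx := (H x).1 (by omega)
          by_cases hax' : a ≤ x'
          · exfalso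
            obtain ⟨h1, _, _⟩ := (H x').2 hax'
            omega
          · exfalso
            have hgx' := (H x').1 (by omega)
            omega
      obtain ⟨hax, hax', hxm⟩ := hmod
      have hby : b ≤ y ∧ b ≤ y' := by
        have hyy : y ≠ y' := by omega
        omega
      exact hpattern x x' y y' hcl hcl' hax hax' hby.1 hby.2 hxm
  refine ⟨{s | ∃ l : List Bool, l.length = n ∧ f l = true ∧
      delta (fun p : ℕ × ℕ => (min (p.1 + 1) b, p.2))
            (fun p : ℕ × ℕ => (p.1, if p.2 + 1 < a + m then p.2 + 1 else a)) (0,0) l = s},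
      fun p => rfl, ?_, ?_⟩
  · intro l hl
    constructor
    · rintro ⟨l', hl', hf', heq⟩
      rw [← hkey l l' hl hl' heq.symm] at hf'
      exact hf'
    · intro hf
      exact ⟨l, hl, hf, rfl⟩
  · nlinarith [sq_nonneg ((a + m) - (b + 1) : ℤ), habm, sq_nonneg (a + m + b + 1 : ℤ)]
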